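/- Let f(t) = 50·√(ln(1/t)) + sin(400·√(ln(1/t))) for t ∈ (0, 1/10]. Then f is differentiable on (0,1/10] with f'(t) = −(25 + 200·cos(400·√(ln(1/t))))/(t·√(ln(1/t))), and there exists a constant C > 0 such that |f'(t)| ≤ C·t⁻¹·(ln(1+1/t))^(−1/2) for all t ∈ (0,1/10]. Thus f satisfies the first-derivative estimate (1.3) with γ = 1/2 and ω ≡ Φ ≡ 1. -/

import Mathlib

open Real Set

theorem example_first_derivative :
    (∀ t ∈ Set.Ioc (0:ℝ) (1/10),
      HasDerivAt
        (fun s : ℝ => 50 * Real.sqrt (Real.log (1/s))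
          + Real.sin (400 * Real.sqrt (Real.log (1/s))))
        (-(25 + 200 * Real.cos (400 * Real.sqrt (Real.log (1/t))))
          / (t * Real.sqrt (Real.log (1/t)))) t) ∧
    ∃ C > 0, ∀ t ∈ Set.Ioc (0:ℝ) (1/10),
      |(-(25 + 200 * Real.cos (400 * Real.sqrt (Real.log (1/t))))
          / (t * Real.sqrt (Real.log (1/t))))|
        ≤ C * t⁻¹ * (Real.log (1 + 1/t)) ^ (-(1:ℝ)/2) := by
  have key : ∀ t ∈ Set.Ioc (0:ℝ) (1/10),
      0 < Real.log (1/t) ∧ Real.log 10 ≤ Real.log (1/t) := by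
    intro t ht
    obtain ⟨ht0, ht1⟩ := ht
    have h10 : (10:ℝ) ≤ 1/t := by
      rw [le_div_iff₀ ht0]; linarith
    have hlog : Real.log 10 ≤ Real.log (1/t) := Real.log_le_log (by norm_num) h10
    have : (0:ℝ) < Real.log 10 := Real.log_pos (by norm_num)
    exact ⟨lt_of_lt_of_le this hlog, hlog⟩
  constructor
  · intro t ht
    obtain ⟨hL, _⟩ := key t ht
    obtain ⟨ht0, _⟩ := ht
    set L := Real.log (1/t) with hLdef
    have hfun : (fun s : ℝ => Real.log (1/s)) = fun s : ℝ => -Real.log s := by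
      funext s; rw [one_div, Real.log_inv]
    have hlog : HasDerivAt (fun s : ℝ => -Real.log s) (-t⁻¹) t :=
      (Real.hasDerivAt_log ht0.ne').neg
    have hlog' : HasDerivAt (fun s : ℝ => Real.log (1/s)) (-t⁻¹) t := by
      rw [hfun]; exact hlog
    have hsqrt : HasDerivAt Real.sqrt (1 / (2 * Real.sqrt L)) L :=
      Real.hasDerivAt_sqrt hL.ne'
    have hg : HasDerivAt (fun s : ℝ => Real.sqrt (Real.log (1/s)))
        ((1 / (2 * Real.sqrt L)) * (-t⁻¹)) t := hsqrt.comp t hlog'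
    have h1 : HasDerivAt (fun s : ℝ => 50 * Real.sqrt (Real.log (1/s)))
        (50 * ((1 / (2 * Real.sqrt L)) * (-t⁻¹))) t := hg.const_mul 50
    have hg4 : HasDerivAt (fun s : ℝ => 400 * Real.sqrt (Real.log (1/s)))
        (400 * ((1 / (2 * Real.sqrt L)) * (-t⁻¹))) t := hg.const_mul 400
    have h2 : HasDerivAt (fun s : ℝ => Real.sin (400 * Real.sqrt (Real.log (1/s))))
        (Real.cos (400 * Real.sqrt L) * (400 * ((1 / (2 * Real.sqrt L)) * (-t⁻¹)))) t :=
      (Real.hasDerivAt_sin _).comp t hg4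
    have := h1.add h2
    refine this.congr_deriv ?_
    have hsL : Real.sqrt L ≠ 0 := by positivity
    field_simp
    ring
  · refine ⟨450, by norm_num, ?_⟩
    intro t ht
    obtain ⟨hL, hL10⟩ := key t ht
    obtain ⟨ht0, ht1⟩ := ht
    set L := Real.log (1/t) with hLdef
    set M := Real.log (1 + 1/t) with hMdef
    have hM : 0 < M := Real.log_pos (by
      have : (0:ℝ) < 1/t := by positivity
      linarith)
    have hML : M ≤ 4 * L := by
      have h2t : 1 + 1/t ≤ 2 * (1/t) := by
        have : (1:ℝ) ≤ 1/t := by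
          rw [le_div_iff₀ ht0]; linarith
        linarith
      have : M ≤ Real.log (2 * (1/t)) := Real.log_le_log (by positivity) h2t
      rw [Real.log_mul (by norm_num) (by positivity)] at this
      have hl2 : Real.log 2 ≤ L := le_trans (Real.log_le_log (by norm_num) (by norm_num)) hL10
      linarith
    have hsqrtM : Real.sqrt M ≤ 2 * Real.sqrt L := by
      calc Real.sqrt M ≤ Real.sqrt (4 * L) := Real.sqrt_le_sqrt hML
        _ = 2 * Real.sqrt L := by
            rw [show (4:ℝ) * L = (2:ℝ)^2 * L by ring, Real.sqrt_mul (by positivity),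
              Real.sqrt_sq (by norm_num)]
    have hrpow : M ^ (-(1:ℝ)/2) = (Real.sqrt M)⁻¹ := by
      rw [show (-(1:ℝ)/2) = -(1/2 : ℝ) by ring, Real.rpow_neg hM.le,
        ← Real.sqrt_eq_rpow]
    rw [hrpow]
    have hsL : 0 < Real.sqrt L := Real.sqrt_pos.mpr hL
    have hsM : 0 < Real.sqrt M := Real.sqrt_pos.mpr hM
    have hnum : |(-(25 + 200 * Real.cos (400 * Real.sqrt L)))| ≤ 225 := by
      have := Real.neg_one_le_cos (400 * Real.sqrt L)
      have := Real.cos_le_one (400 * Real.sqrt L)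
      rw [abs_le]; constructor <;> nlinarith
    have hden : (0:ℝ) < t * Real.sqrt L := by positivity
    calc |(-(25 + 200 * Real.cos (400 * Real.sqrt L))) / (t * Real.sqrt L)|
        = |(-(25 + 200 * Real.cos (400 * Real.sqrt L)))| / (t * Real.sqrt L) := by
          rw [abs_div, abs_of_pos hden]
      _ ≤ 225 / (t * Real.sqrt L) := by gcongr
      _ ≤ 450 * t⁻¹ * (Real.sqrt M)⁻¹ := by
          rw [show (450:ℝ) * t⁻¹ * (Real.sqrt M)⁻¹ = 450 / (t * Real.sqrt M) by
            field_simp]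
          rw [div_le_div_iff₀ hden (by positivity)]
          nlinarith
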